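/- Let Δ = Δ_0 + Δ_1 + ⋯ + Δ_k be a Minkowski sum decomposition of a reflexive polytope Δ ⊂ ℝ^d into lattice polytopes. Then the Cayley cone σ̄ ⊂ ℝ^d ⊕ ℝ^{k+1} is a reflexive Gorenstein cone of index k+1, with distinguished points n_σ̄ = r_0* + r_1* + ⋯ + r_k* and m_{σ̄∨} = r_0 + r_1 + ⋯ + r_k; that is, every primitive lattice generator of σ̄ pairs to 1 with r_0* + ⋯ + r_k*, every primitive lattice generator of σ̄∨ pairs to 1 with r_0 + ⋯ + r_k, and the index ⟨m_{σ̄∨}, n_σ̄⟩ equals k+1. -/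

import Mathlib

open scoped Pointwise
open Set

noncomputable section

/-- The standard pairing on `ℝ^n`. -/
def pairing {n : ℕ} (x y : Fin n → ℝ) : ℝ := ∑ i, x i * y i

/-- A point of `ℝ^n` lying in the lattice `ℤ^n`. -/
def IsLatticePt {n : ℕ} (x : Fin n → ℝ) : Prop := ∀ i, ∃ z : ℤ, x i = (z : ℝ)

/-- A lattice polytope: the convex hull of finitely many lattice points. -/
def IsLatticePolytope {n : ℕ} (P : Set (Fin n → ℝ)) : Prop :=
  ∃ S : Set (Fin n → ℝ), S.Finite ∧ (∀ x ∈ S, IsLatticePt x) ∧ P = convexHull ℝ S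

/-- The dual polytope `P* = {y | ⟨x,y⟩ ≥ -1 ∀ x ∈ P}`. -/
def polarDual {n : ℕ} (P : Set (Fin n → ℝ)) : Set (Fin n → ℝ) :=
  {y | ∀ x ∈ P, -1 ≤ pairing x y}

/-- A reflexive polytope. -/
def IsReflexive {n : ℕ} (P : Set (Fin n → ℝ)) : Prop :=
  IsLatticePolytope P ∧ (0 : Fin n → ℝ) ∈ interior P ∧ IsLatticePolytope (polarDual P)

/-- `min⟨P, u⟩ = min_{x ∈ P} ⟨x, u⟩`. -/
def minPair {n : ℕ} (P : Set (Fin n → ℝ)) (u : Fin n → ℝ) : ℝ :=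
  sInf ((fun x => pairing x u) '' P)

/-- The real vector space `ℝ^d ⊕ ℝ^k`. -/
abbrev Vdk (d k : ℕ) := (Fin d → ℝ) × (Fin k → ℝ)

/-- The pairing on `ℝ^d ⊕ ℝ^k` (sum of the two standard pairings). -/
def pairingV {d k : ℕ} (x y : Vdk d k) : ℝ := pairing x.1 y.1 + pairing x.2 y.2

def IsLatticePtV {d k : ℕ} (x : Vdk d k) : Prop := IsLatticePt x.1 ∧ IsLatticePt x.2

def IsLatticePolytopeV {d k : ℕ} (P : Set (Vdk d k)) : Prop :=
  ∃ S : Set (Vdk d k), S.Finite ∧ (∀ x ∈ S, IsLatticePtV x) ∧ P = convexHull ℝ S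

def polarDualV {d k : ℕ} (P : Set (Vdk d k)) : Set (Vdk d k) :=
  {y | ∀ x ∈ P, -1 ≤ pairingV x y}

def IsReflexiveV {d k : ℕ} (P : Set (Vdk d k)) : Prop :=
  IsLatticePolytopeV P ∧ (0 : Vdk d k) ∈ interior P ∧ IsLatticePolytopeV (polarDualV P)

/-- The Cayley cone `σ̄ = {(t₀Δ₀ + ⋯ + t_kΔ_k, t₀, …, t_k) : tᵢ ≥ 0} ⊆ ℝ^d ⊕ ℝ^{k+1}`. -/
def cayleyCone {d k : ℕ} (Δ : Fin (k+1) → Set (Fin d → ℝ)) : Set (Vdk d (k+1)) :=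
  {p | (∀ i, 0 ≤ p.2 i) ∧ p.1 ∈ ∑ i, p.2 i • Δ i}

/-- The dual cone of a cone in `ℝ^d ⊕ ℝ^k`. -/
def dualConeV {d k : ℕ} (σ : Set (Vdk d k)) : Set (Vdk d k) :=
  {y | ∀ x ∈ σ, 0 ≤ pairingV x y}

/-- `v` is a primitive lattice generator of the cone `σ`: a lattice point which is the
shortest lattice point on an extreme ray of `σ`. -/
def IsPrimitiveGenerator {d k : ℕ} (σ : Set (Vdk d k)) (v : Vdk d k) : Prop :=
  IsLatticePtV v ∧ v ≠ 0 ∧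
    IsExtreme ℝ σ {z | ∃ t : ℝ, 0 ≤ t ∧ z = t • v} ∧
    ∀ t : ℝ, 0 < t → t < 1 → ¬ IsLatticePtV (t • v)

section Aux
variable {n d k : ℕ}

lemma pairing_add_left (x x' y : Fin n → ℝ) : pairing (x + x') y = pairing x y + pairing x' y := by
  simp [pairing, add_mul, Finset.sum_add_distrib]

lemma pairing_smul_left (c : ℝ) (x y : Fin n → ℝ) : pairing (c • x) y = c * pairing x y := by
  simp [pairing, Finset.mul_sum, mul_assoc]

lemma pairing_add_right (x y y' : Fin n → ℝ) : pairing x (y + y') = pairing x y + pairing x y' := by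
  simp [pairing, mul_add, Finset.sum_add_distrib]

lemma pairing_smul_right (c : ℝ) (x y : Fin n → ℝ) : pairing x (c • y) = c * pairing x y := by
  simp [pairing, Finset.mul_sum, mul_left_comm]

@[simp] lemma pairing_zero_left (y : Fin n → ℝ) : pairing 0 y = 0 := by simp [pairing]
@[simp] lemma pairing_zero_right (x : Fin n → ℝ) : pairing x 0 = 0 := by simp [pairing]

lemma pairing_sum_left {ι : Type*} (s : Finset ι) (f : ι → Fin n → ℝ) (y : Fin n → ℝ) :
    pairing (∑ i ∈ s, f i) y = ∑ i ∈ s, pairing (f i) y := by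
  classical
  induction s using Finset.induction with
  | empty => simp
  | insert _ _ h ih => rw [Finset.sum_insert h, Finset.sum_insert h, pairing_add_left, ih]

lemma pairingV_smul_right {x y : Vdk d k} (c : ℝ) :
    pairingV x (c • y) = c * pairingV x y := by
  simp [pairingV, pairing_smul_right, mul_add]

lemma pairingV_smul_left {x y : Vdk d k} (c : ℝ) :
    pairingV (c • x) y = c * pairingV x y := by
  simp [pairingV, pairing_smul_left, mul_add]

lemma pairing_int {x y : Fin n → ℝ} (hx : IsLatticePt x) (hy : IsLatticePt y) :
    ∃ z : ℤ, pairing x y = (z : ℝ) := by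
  choose a ha using hx
  choose b hb using hy
  refine ⟨∑ i, a i * b i, ?_⟩
  rw [pairing]
  push_cast
  exact Finset.sum_congr rfl fun i _ => by rw [ha, hb]

lemma exists_min_on_hull {S : Set (Fin n → ℝ)} (hfin : S.Finite) (hne : S.Nonempty)
    (u : Fin n → ℝ) :
    ∃ x₀ ∈ S, ∀ x ∈ convexHull ℝ S, pairing x₀ u ≤ pairing x u := by
  obtain ⟨x₀, hx₀S, hmin⟩ := hfin.toFinset.exists_min_image (fun x => pairing x u)
    (by simpa using hne)
  refine ⟨x₀, by simpa using hx₀S, ?_⟩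
  have hlin : IsLinearMap ℝ (fun x : Fin n → ℝ => pairing x u) :=
    ⟨fun a b => pairing_add_left a b u, fun c a => by simp [pairing_smul_left]⟩
  have hconv : Convex ℝ {x : Fin n → ℝ | pairing x₀ u ≤ pairing x u} :=
    convex_halfSpace_ge hlin _
  intro x hx
  exact convexHull_min (fun s hs => hmin s (by simpa using hs)) hconv hx

lemma pairing_self_pos {y : Fin n → ℝ} (hy : y ≠ 0) : 0 < pairing y y := by
  obtain ⟨i, hi⟩ := Function.ne_iff.1 hy
  refine Finset.sum_pos' (fun j _ => mul_self_nonneg _) ⟨i, Finset.mem_univ i, ?_⟩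
  exact mul_self_pos.2 hi

lemma exists_neg_smul_mem {P : Set (Fin n → ℝ)} (h0 : (0 : Fin n → ℝ) ∈ interior P)
    (y : Fin n → ℝ) : ∃ c : ℝ, 0 < c ∧ (-c) • y ∈ P := by
  obtain ⟨ε, hε, hball⟩ := Metric.mem_nhds_iff.1 (mem_interior_iff_mem_nhds.1 h0)
  have hy1 : (0:ℝ) < ‖y‖ + 1 := by positivity
  refine ⟨ε / (2 * (‖y‖ + 1)), by positivity, ?_⟩
  apply hball
  rw [Metric.mem_ball, dist_zero_right, norm_smul]
  have h1 : ‖-(ε / (2 * (‖y‖ + 1)))‖ = ε / (2 * (‖y‖ + 1)) := by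
    rw [norm_neg, Real.norm_eq_abs, abs_of_pos (by positivity)]
  rw [h1]
  calc ε / (2 * (‖y‖ + 1)) * ‖y‖ < ε / (2 * (‖y‖ + 1)) * (‖y‖ + 1) := by
        exact mul_lt_mul_of_pos_left (lt_add_one _) (by positivity)
    _ = ε / 2 := by field_simp
    _ < ε := by linarith

end Aux

section Cayley
variable {d k : ℕ} {Δ : Fin (k+1) → Set (Fin d → ℝ)}

lemma mem_cayley_of (t : Fin (k+1) → ℝ) (g : Fin (k+1) → Fin d → ℝ)
    (ht : ∀ i, 0 ≤ t i) (hg : ∀ i, g i ∈ Δ i) :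
    ((∑ i, t i • g i, t) : Vdk d (k+1)) ∈ cayleyCone Δ := by
  refine ⟨ht, ?_⟩
  rw [Set.mem_fintype_sum]
  exact ⟨fun i => t i • g i, fun i => Set.smul_mem_smul_set (hg i), rfl⟩

lemma cayley_decomp {p : Vdk d (k+1)} (hp : p ∈ cayleyCone Δ) :
    ∃ g : Fin (k+1) → Fin d → ℝ, (∀ i, g i ∈ Δ i) ∧ p.1 = ∑ i, p.2 i • g i := by
  obtain ⟨f, hf, hsum⟩ := (Set.mem_fintype_sum _ _).1 hp.2
  choose g hg hfg using fun i => (Set.mem_smul_set.1 (hf i))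
  exact ⟨g, hg, by rw [← hsum]; exact Finset.sum_congr rfl fun i _ => (hfg i).symm⟩

lemma mem_cayley_single (hne : ∀ i, (Δ i).Nonempty) {i : Fin (k+1)} {c : ℝ} (hc : 0 ≤ c)
    {x : Fin d → ℝ} (hx : x ∈ Δ i) :
    ((c • x, Pi.single i c) : Vdk d (k+1)) ∈ cayleyCone Δ := by
  choose g hg using hne
  have hsum : (∑ m, (Pi.single i c : Fin (k+1) → ℝ) m • Function.update g i x m) = c • x := by
    rw [Finset.sum_eq_single i]
    · rw [Pi.single_eq_same, Function.update_self]
    · intro m _ hmi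
      rw [Pi.single_eq_of_ne hmi, zero_smul]
    · simp
  have h := mem_cayley_of (Δ := Δ) (Pi.single i c) (Function.update g i x)
    (fun m => by
      rcases eq_or_ne m i with rfl | h
      · simpa using hc
      · simp [Pi.single_eq_of_ne h])
    (fun m => by
      rcases eq_or_ne m i with rfl | h
      · simpa [Function.update_self] using hx
      · simpa [Function.update_of_ne h] using hg m)
  rwa [hsum] at h

lemma cayley_smul {p : Vdk d (k+1)} (hp : p ∈ cayleyCone Δ) {c : ℝ} (hc : 0 ≤ c) :
    c • p ∈ cayleyCone Δ := by
  obtain ⟨g, hg, hsum⟩ := cayley_decomp hp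
  have h1 : (∑ i, (c • p.2) i • g i) = c • p.1 := by
    rw [hsum, Finset.smul_sum]
    exact Finset.sum_congr rfl fun i _ => by simp [smul_smul]
  have h := mem_cayley_of (Δ := Δ) (c • p.2) g
    (fun i => by
      have := mul_nonneg hc (hp.1 i)
      simpa [smul_eq_mul] using this) hg
  rw [h1] at h
  exact h

lemma dual_smul {σ : Set (Vdk d k)} {w : Vdk d k} (hw : w ∈ dualConeV σ) {c : ℝ} (hc : 0 ≤ c) :
    c • w ∈ dualConeV σ := fun x hx => by
  rw [pairingV_smul_right]
  exact mul_nonneg hc (hw x hx)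

end Cayley
/-- the Cayley cone of a Minkowski sum decomposition of a reflexive polytope is a
reflexive Gorenstein cone of index `k+1`, with distinguished points
`n_σ̄ = r₀* + ⋯ + r_k*` and `m_σ̄∨ = r₀ + ⋯ + r_k`. -/
theorem cayleyCone_reflexive_gorenstein {d k : ℕ}
    (Δ : Fin (k+1) → Set (Fin d → ℝ))
    (hlat : ∀ i, IsLatticePolytope (Δ i))
    (hrefl : IsReflexive (∑ i, Δ i)) :
    (∀ v, IsPrimitiveGenerator (cayleyCone Δ) v →
        pairingV v (((0 : Fin d → ℝ), fun _ => 1) : Vdk d (k+1)) = 1) ∧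
    (∀ w, IsPrimitiveGenerator (dualConeV (cayleyCone Δ)) w →
        pairingV (((0 : Fin d → ℝ), fun _ => 1) : Vdk d (k+1)) w = 1) ∧
    pairingV (((0 : Fin d → ℝ), fun _ => 1) : Vdk d (k+1))
        (((0 : Fin d → ℝ), fun _ => 1) : Vdk d (k+1)) = k + 1 := by
  -- Setup
  choose S hSfin hSlat hSeq using hlat
  have h0mem : (0 : Fin d → ℝ) ∈ ∑ i, Δ i := interior_subset hrefl.2.1
  obtain ⟨g0, hg0, -⟩ := (Set.mem_fintype_sum _ _).1 h0mem
  have hΔne : ∀ i, (Δ i).Nonempty := fun i => ⟨g0 i, hg0 i⟩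
  refine ⟨?_, ?_, ?_⟩
  · -- PART 1
    rintro v ⟨hvlat, hvne, hvext, hvprim⟩
    have hvray : v ∈ {z : Vdk d (k+1) | ∃ t : ℝ, 0 ≤ t ∧ z = t • v} :=
      ⟨1, zero_le_one, (one_smul ℝ v).symm⟩
    have hvmem : v ∈ cayleyCone Δ := hvext.1 hvray
    obtain ⟨g, hg, hsum⟩ := cayley_decomp hvmem
    have ht : ∀ i, 0 ≤ v.2 i := hvmem.1
    have huniq : ∀ i j, 0 < v.2 i → 0 < v.2 j → i = j := by
      intro i j hi hj
      by_contra hij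
      set tP : Fin (k+1) → ℝ := Pi.single i (v.2 i) with htPdef
      set tQ : Fin (k+1) → ℝ := fun m => if m = i then 0 else v.2 m with htQdef
      set P : Vdk d (k+1) := (∑ m, tP m • g m, tP) with hPdef
      set Q : Vdk d (k+1) := (∑ m, tQ m • g m, tQ) with hQdef
      have hP : P ∈ cayleyCone Δ := mem_cayley_of _ _
        (fun m => by
          rcases eq_or_ne m i with rfl | h
          · simpa [htPdef] using hi.le
          · simp [htPdef, Pi.single_eq_of_ne h]) hg
      have hQ : Q ∈ cayleyCone Δ := mem_cayley_of _ _
        (fun m => by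
          rcases eq_or_ne m i with rfl | h
          · simp [htQdef]
          · simp [htQdef, h, ht m]) hg
      have htPQ : ∀ m, tP m + tQ m = v.2 m := by
        intro m
        rcases eq_or_ne m i with rfl | h
        · simp [htPdef, htQdef]
        · simp [htPdef, htQdef, h, Pi.single_eq_of_ne h]
      have hPQ : P + Q = v := by
        have h1 : P.1 + Q.1 = v.1 := by
          rw [hPdef, hQdef, hsum, ← Finset.sum_add_distrib]
          exact Finset.sum_congr rfl fun m _ => by rw [← add_smul, htPQ]
        have h2 : P.2 + Q.2 = v.2 := funext fun m => htPQ m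
        exact Prod.ext h1 h2
      have hseg : v ∈ openSegment ℝ ((2:ℝ) • P) ((2:ℝ) • Q) := by
        refine ⟨1/2, 1/2, by norm_num, by norm_num, by norm_num, ?_⟩
        rw [smul_smul, smul_smul]
        norm_num
        exact hPQ
      obtain ⟨t, ht0, h2P⟩ := hvext.2 (cayley_smul hP (by norm_num))
        (cayley_smul hQ (by norm_num)) hvray hseg
      have hcomp : (2:ℝ) * tP j = t * v.2 j := by
        have := congrArg (fun p : Vdk d (k+1) => p.2 j) h2P
        simpa [Prod.smul_snd, smul_eq_mul] using this
      rw [htPdef, Pi.single_eq_of_ne (Ne.symm hij), mul_zero] at hcomp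
      have htzero : t = 0 := by
        rcases mul_eq_zero.1 hcomp.symm with h | h
        · exact h
        · exact absurd h (ne_of_gt hj)
      have hcompi : (2:ℝ) * tP i = t * v.2 i := by
        have := congrArg (fun p : Vdk d (k+1) => p.2 i) h2P
        simpa [Prod.smul_snd, smul_eq_mul] using this
      rw [htPdef, Pi.single_eq_same, htzero, zero_mul] at hcompi
      nlinarith
    by_cases hpos : ∃ i, 0 < v.2 i
    · obtain ⟨i₀, hi₀⟩ := hpos
      have hzero : ∀ m, m ≠ i₀ → v.2 m = 0 := by
        intro m hm
        rcases (ht m).lt_or_eq with h | h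
        · exact absurd (huniq m i₀ h hi₀) hm
        · exact h.symm
      set c : ℝ := v.2 i₀ with hcdef
      have hv2 : v.2 = Pi.single i₀ c := funext fun m => by
        rcases eq_or_ne m i₀ with rfl | h
        · simp [hcdef]
        · simp [Pi.single_eq_of_ne h, hzero m h]
      have hv1 : v.1 = c • g i₀ := by
        rw [hsum, Finset.sum_eq_single i₀]
        · intro m _ hm
          rw [hzero m hm, zero_smul]
        · simp
      -- g i₀ is an extreme point of Δ i₀
      have hgext : g i₀ ∈ Set.extremePoints ℝ (Δ i₀) := by
        refine ⟨hg i₀, ?_⟩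
        intro x₁ hx₁ x₂ hx₂ hseg
        obtain ⟨a, b, ha, hb, hab, habv⟩ := hseg
        set X₁ : Vdk d (k+1) := (c • x₁, Pi.single i₀ c) with hX₁def
        set X₂ : Vdk d (k+1) := (c • x₂, Pi.single i₀ c) with hX₂def
        have hX₁ : X₁ ∈ cayleyCone Δ := mem_cayley_single hΔne hi₀.le hx₁
        have hX₂ : X₂ ∈ cayleyCone Δ := mem_cayley_single hΔne hi₀.le hx₂
        have hvseg : v ∈ openSegment ℝ X₁ X₂ := by
          refine ⟨a, b, ha, hb, hab, ?_⟩
          refine Prod.ext ?_ ?_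
          · show a • (c • x₁) + b • (c • x₂) = v.1
            rw [hv1, smul_comm a c, smul_comm b c, ← smul_add, habv]
          · show a • (Pi.single i₀ c : Fin (k+1) → ℝ) + b • (Pi.single i₀ c : Fin (k+1) → ℝ) = v.2
            rw [hv2, ← add_smul, hab, one_smul]
        obtain ⟨t1, -, hX1⟩ := hvext.2 hX₁ hX₂ hvray hvseg
        have key : ∀ (x : Fin d → ℝ) (s : ℝ), (((c • x, Pi.single i₀ c) : Vdk d (k+1)) = s • v) → x = g i₀ := by
          intro x s hxs
          have h2 : c = s * c := by
            have := congrArg (fun p : Vdk d (k+1) => p.2 i₀) hxs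
            simpa [Prod.smul_snd, smul_eq_mul, hv2] using this
          have hs1 : s = 1 := by
            have hc0 : c ≠ 0 := ne_of_gt hi₀
            field_simp at h2
            tauto
          have h1 : c • x = c • g i₀ := by
            have := congrArg (fun p : Vdk d (k+1) => p.1) hxs
            simpa [hs1, hv1] using this
          exact smul_right_injective (Fin d → ℝ) (ne_of_gt hi₀) h1
        exact key x₁ t1 hX1
      have hgS : g i₀ ∈ S i₀ := by
        rw [hSeq i₀] at hgext
        exact extremePoints_convexHull_subset hgext
      have hglat : IsLatticePt (g i₀) := hSlat i₀ _ hgS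
      -- c is a positive integer and c ≤ 1
      obtain ⟨z, hz⟩ := hvlat.2 i₀
      have hc1 : c ≤ 1 := by
        by_contra hc1
        push_neg at hc1
        have hcpos : (0:ℝ) < c := hi₀
        have hinv : c⁻¹ • v = ((g i₀ : Fin d → ℝ), (Pi.single i₀ 1 : Fin (k+1) → ℝ)) := by
          refine Prod.ext ?_ ?_
          · show c⁻¹ • v.1 = g i₀
            rw [hv1, inv_smul_smul₀ (ne_of_gt hcpos)]
          · show c⁻¹ • v.2 = Pi.single i₀ 1
            rw [hv2]
            funext m
            rcases eq_or_ne m i₀ with rfl | h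
            · simp [inv_mul_cancel₀ (ne_of_gt hcpos)]
            · simp [Pi.single_eq_of_ne h]
        have hlatinv : IsLatticePtV (c⁻¹ • v) := by
          rw [hinv]
          refine ⟨hglat, fun m => ?_⟩
          rcases eq_or_ne m i₀ with rfl | h
          · exact ⟨1, by simp⟩
          · exact ⟨0, by simp [Pi.single_eq_of_ne h]⟩
        exact hvprim c⁻¹ (by positivity) (inv_lt_one_of_one_lt₀ hc1) hlatinv
      have hceq : c = 1 := by
        have hz1 : (1:ℤ) ≤ z := by
          have : (0:ℝ) < (z:ℝ) := hz ▸ hi₀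
          exact_mod_cast this
        have hz2 : (z:ℤ) ≤ 1 := by
          have : (z:ℝ) ≤ 1 := hz ▸ hc1
          exact_mod_cast this
        have hcz : c = (z:ℝ) := by rw [hcdef, hz]
        rw [hcz]
        exact_mod_cast le_antisymm hz2 hz1
      simp only [pairingV, pairing_zero_right, pairing, hv2, zero_add]
      simp [Finset.sum_pi_single', hceq]
    · push_neg at hpos
      exfalso
      apply hvne
      have h2 : v.2 = 0 := funext fun m => le_antisymm (hpos m) (ht m)
      have h1 : v.1 = 0 := by
        rw [hsum, h2]
        simp
      exact Prod.ext h1 h2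
  · -- PART 2
    rintro w ⟨hwlat, hwne, hwext, hwprim⟩
    have hwray : w ∈ {z : Vdk d (k+1) | ∃ t : ℝ, 0 ≤ t ∧ z = t • w} :=
      ⟨1, zero_le_one, (one_smul ℝ w).symm⟩
    have hwmem : w ∈ dualConeV (cayleyCone Δ) := hwext.1 hwray
    have hSne : ∀ i, (S i).Nonempty := fun i => by
      have h := hΔne i
      rw [hSeq i] at h
      exact convexHull_nonempty_iff.1 h
    -- minimizers of the pairing over each Δ i
    choose xm hxmS hxmMin using fun i (u : Fin d → ℝ) => exists_min_on_hull (hSfin i) (hSne i) u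
    set μ : Fin (k+1) → (Fin d → ℝ) → ℝ := fun i u => pairing (xm i u) u with hμdef
    have hxmΔ : ∀ i u, xm i u ∈ Δ i := fun i u => by
      rw [hSeq i]; exact subset_convexHull ℝ _ (hxmS i u)
    have hmin : ∀ i u, ∀ x ∈ Δ i, μ i u ≤ pairing x u := fun i u x hx =>
      hxmMin i u x (by rwa [← hSeq i])
    -- membership criterion for the dual cone
    have hdual_iff : ∀ z : Vdk d (k+1),
        z ∈ dualConeV (cayleyCone Δ) ↔ ∀ i, 0 ≤ μ i z.1 + z.2 i := by
      intro z
      constructor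
      · intro hz i
        have hx := mem_cayley_single (Δ := Δ) hΔne zero_le_one (hxmΔ i z.1)
        have h := hz _ hx
        have he : pairingV ((1:ℝ) • xm i z.1, Pi.single i (1:ℝ)) z = μ i z.1 + z.2 i := by
          rw [pairingV, one_smul]
          congr 1
          show pairing (Pi.single i (1:ℝ)) z.2 = z.2 i
          rw [pairing, Finset.sum_eq_single i]
          · rw [Pi.single_eq_same, one_mul]
          · intro m _ hm
            rw [Pi.single_eq_of_ne hm, zero_mul]
          · simp
        rwa [he] at h
      · intro hz p hp
        obtain ⟨g', hg', hsum'⟩ := cayley_decomp hp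
        have h1 : pairing p.1 z.1 = ∑ i, p.2 i * pairing (g' i) z.1 := by
          rw [hsum', pairing_sum_left]
          exact Finset.sum_congr rfl fun i _ => pairing_smul_left _ _ _
        have h2 : pairing p.2 z.2 = ∑ i, p.2 i * z.2 i := rfl
        rw [pairingV, h1, h2, ← Finset.sum_add_distrib]
        apply Finset.sum_nonneg
        intro i _
        nlinarith [hp.1 i, hmin i z.1 (g' i) (hg' i), hz i]
    -- homogeneity of μ
    have hμhom : ∀ i (cr : ℝ) u, 0 ≤ cr → μ i (cr • u) = cr * μ i u := by
      intro i cr u hcr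
      apply le_antisymm
      · calc μ i (cr • u) ≤ pairing (xm i u) (cr • u) := hmin i (cr • u) _ (hxmΔ i u)
          _ = cr * pairing (xm i u) u := pairing_smul_right _ _ _
      · calc cr * μ i u ≤ cr * pairing (xm i (cr • u)) u :=
            mul_le_mul_of_nonneg_left (hmin i u _ (hxmΔ i (cr • u))) hcr
          _ = pairing (xm i (cr • u)) (cr • u) := (pairing_smul_right _ _ _).symm
    -- superadditivity of μ
    have hμsup : ∀ i (a b : ℝ) (p q : Fin d → ℝ), 0 ≤ a → 0 ≤ b →
        a * μ i p + b * μ i q ≤ μ i (a • p + b • q) := by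
      intro i a b p q ha hb
      set u' := a • p + b • q with hu'
      have h1 : μ i p ≤ pairing (xm i u') p := hmin i p _ (hxmΔ i u')
      have h2 : μ i q ≤ pairing (xm i u') q := hmin i q _ (hxmΔ i u')
      have he : μ i u' = a * pairing (xm i u') p + b * pairing (xm i u') q := by
        show pairing (xm i u') u' = _
        rw [hu', pairing_add_right, pairing_smul_right, pairing_smul_right]
      rw [he]
      exact add_le_add (mul_le_mul_of_nonneg_left h1 ha) (mul_le_mul_of_nonneg_left h2 hb)
    -- sum bound and attainment
    have hmusum : ∀ u, ∀ x ∈ ∑ i, Δ i, (∑ i, μ i u) ≤ pairing x u := by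
      intro u x hx
      obtain ⟨f, hf, hsum'⟩ := (Set.mem_fintype_sum _ _).1 hx
      rw [← hsum', pairing_sum_left]
      exact Finset.sum_le_sum fun i _ => hmin i u (f i) (hf i)
    have hattmem : ∀ u, (∑ i, xm i u) ∈ ∑ i, Δ i := by
      intro u
      rw [Set.mem_fintype_sum]
      exact ⟨fun i => xm i u, fun i => hxmΔ i u, rfl⟩
    have hsump : ∀ u, u ∈ polarDual (∑ i, Δ i) → -1 ≤ ∑ i, μ i u := by
      intro u hu
      have h := hu _ (hattmem u)
      rwa [pairing_sum_left] at h
    have hws : ∀ i, 0 ≤ μ i w.1 + w.2 i := (hdual_iff w).1 hwmem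
    by_cases hy : w.1 = 0
    · -- CASE w.1 = 0
      have hμ0 : ∀ i, μ i w.1 = 0 := fun i => by
        rw [hy]
        show pairing (xm i 0) 0 = 0
        exact pairing_zero_right _
      have hs0 : ∀ i, 0 ≤ w.2 i := fun i => by have := hws i; rw [hμ0] at this; linarith
      have huniq2 : ∀ i j, 0 < w.2 i → 0 < w.2 j → i = j := by
        intro i j hi hj
        by_contra hij
        set P : Vdk d (k+1) := ((0 : Fin d → ℝ), Pi.single i (w.2 i)) with hPdef
        set Q : Vdk d (k+1) := ((0 : Fin d → ℝ), fun m => if m = i then 0 else w.2 m) with hQdef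
        have hμP : ∀ m, μ m (0 : Fin d → ℝ) = 0 := fun m => by
          show pairing (xm m 0) 0 = 0
          exact pairing_zero_right _
        have hP : P ∈ dualConeV (cayleyCone Δ) := (hdual_iff P).2 fun m => by
          rw [hPdef]
          simp only [hμP, zero_add]
          rcases eq_or_ne m i with rfl | h
          · simpa using hi.le
          · simp [Pi.single_eq_of_ne h]
        have hQ : Q ∈ dualConeV (cayleyCone Δ) := (hdual_iff Q).2 fun m => by
          rw [hQdef]
          simp only [hμP, zero_add]
          rcases eq_or_ne m i with rfl | h
          · simp
          · simp [h, hs0 m]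
        have hPQ : P + Q = w := by
          refine Prod.ext ?_ ?_
          · show (0 : Fin d → ℝ) + 0 = w.1
            rw [hy, add_zero]
          · show Pi.single i (w.2 i) + _ = w.2
            funext m
            rcases eq_or_ne m i with rfl | h
            · simp [hQdef]
            · simp [Pi.single_eq_of_ne h, h, hQdef]
        have hseg : w ∈ openSegment ℝ ((2:ℝ) • P) ((2:ℝ) • Q) := by
          refine ⟨1/2, 1/2, by norm_num, by norm_num, by norm_num, ?_⟩
          rw [smul_smul, smul_smul]
          norm_num
          exact hPQ
        obtain ⟨t, ht0, h2P⟩ := hwext.2 (dual_smul hP (by norm_num))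
          (dual_smul hQ (by norm_num)) hwray hseg
        have hcomp : (2:ℝ) * (Pi.single i (w.2 i) : Fin (k+1) → ℝ) j = t * w.2 j := by
          have := congrArg (fun p : Vdk d (k+1) => p.2 j) h2P
          simpa [Prod.smul_snd, smul_eq_mul] using this
        rw [Pi.single_eq_of_ne (Ne.symm hij), mul_zero] at hcomp
        have htzero : t = 0 := by
          rcases mul_eq_zero.1 hcomp.symm with h | h
          · exact h
          · exact absurd h (ne_of_gt hj)
        have hcompi : (2:ℝ) * (Pi.single i (w.2 i) : Fin (k+1) → ℝ) i = t * w.2 i := by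
          have := congrArg (fun p : Vdk d (k+1) => p.2 i) h2P
          simpa [Prod.smul_snd, smul_eq_mul, hPdef] using this
        rw [Pi.single_eq_same, htzero, zero_mul] at hcompi
        nlinarith
      by_cases hpos : ∃ i, 0 < w.2 i
      · obtain ⟨i₀, hi₀⟩ := hpos
        have hzero : ∀ m, m ≠ i₀ → w.2 m = 0 := by
          intro m hm
          rcases (hs0 m).lt_or_eq with h | h
          · exact absurd (huniq2 m i₀ h hi₀) hm
          · exact h.symm
        set c : ℝ := w.2 i₀ with hcdef
        have hw2 : w.2 = Pi.single i₀ c := funext fun m => by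
          rcases eq_or_ne m i₀ with rfl | h
          · simp [hcdef]
          · simp [Pi.single_eq_of_ne h, hzero m h]
        obtain ⟨z, hz⟩ := hwlat.2 i₀
        have hc1 : c ≤ 1 := by
          by_contra hc1
          push_neg at hc1
          have hcpos : (0:ℝ) < c := hi₀
          have hinv : c⁻¹ • w = ((0 : Fin d → ℝ), (Pi.single i₀ 1 : Fin (k+1) → ℝ)) := by
            refine Prod.ext ?_ ?_
            · show c⁻¹ • w.1 = 0
              rw [hy, smul_zero]
            · show c⁻¹ • w.2 = Pi.single i₀ 1
              rw [hw2]
              funext m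
              rcases eq_or_ne m i₀ with rfl | h
              · simp [inv_mul_cancel₀ (ne_of_gt hcpos)]
              · simp [Pi.single_eq_of_ne h]
          have hlatinv : IsLatticePtV (c⁻¹ • w) := by
            rw [hinv]
            refine ⟨fun m => ⟨0, by simp⟩, fun m => ?_⟩
            rcases eq_or_ne m i₀ with rfl | h
            · exact ⟨1, by simp⟩
            · exact ⟨0, by simp [Pi.single_eq_of_ne h]⟩
          exact hwprim c⁻¹ (by positivity) (inv_lt_one_of_one_lt₀ hc1) hlatinv
        have hceq : c = 1 := by
          have hz1 : (1:ℤ) ≤ z := by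
            have : (0:ℝ) < (z:ℝ) := hz ▸ hi₀
            exact_mod_cast this
          have hz2 : (z:ℤ) ≤ 1 := by
            have : (z:ℝ) ≤ 1 := hz ▸ hc1
            exact_mod_cast this
          have hcz : c = (z:ℝ) := by rw [hcdef, hz]
          rw [hcz]
          exact_mod_cast le_antisymm hz2 hz1
        simp only [pairingV, pairing_zero_left, pairing, hw2, zero_add]
        simp [Finset.sum_pi_single', hceq]
      · push_neg at hpos
        exfalso
        apply hwne
        have h2 : w.2 = 0 := funext fun m => le_antisymm (hpos m) (hs0 m)
        exact Prod.ext hy h2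
    · -- CASE w.1 ≠ 0
      have htight : ∀ j, w.2 j = -μ j w.1 := by
        intro j
        by_contra hj
        have hjlt : -μ j w.1 < w.2 j := lt_of_le_of_ne (by linarith [hws j]) (Ne.symm hj)
        set ε : ℝ := μ j w.1 + w.2 j with hεdef
        have hε : 0 < ε := by rw [hεdef]; linarith
        set Wp : Vdk d (k+1) := (w.1, fun m => w.2 m + if m = j then ε else 0) with hWpdef
        set Wm : Vdk d (k+1) := (w.1, fun m => w.2 m - if m = j then ε else 0) with hWmdef
        have hWp : Wp ∈ dualConeV (cayleyCone Δ) := (hdual_iff Wp).2 fun m => by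
          show 0 ≤ μ m w.1 + (w.2 m + if m = j then ε else 0)
          rcases eq_or_ne m j with rfl | h
          · rw [if_pos rfl]
            linarith [hws m, hε]
          · rw [if_neg h, add_zero]
            exact hws m
        have hWm : Wm ∈ dualConeV (cayleyCone Δ) := (hdual_iff Wm).2 fun m => by
          show 0 ≤ μ m w.1 + (w.2 m - if m = j then ε else 0)
          rcases eq_or_ne m j with rfl | h
          · rw [if_pos rfl, hεdef]
            linarith
          · rw [if_neg h, sub_zero]
            exact hws m
        have hseg : w ∈ openSegment ℝ Wp Wm := by
          refine ⟨1/2, 1/2, by norm_num, by norm_num, by norm_num, ?_⟩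
          refine Prod.ext ?_ ?_
          · show (1/2 : ℝ) • w.1 + (1/2 : ℝ) • w.1 = w.1
            rw [← add_smul]
            norm_num
          · funext m
            show (1/2 : ℝ) * (w.2 m + if m = j then ε else 0)
                + (1/2 : ℝ) * (w.2 m - if m = j then ε else 0) = w.2 m
            ring
        obtain ⟨t, ht0, hWt⟩ := hwext.2 hWp hWm hwray hseg
        obtain ⟨m0, hm0⟩ := Function.ne_iff.1 hy
        have h1 : w.1 m0 = t * w.1 m0 := by
          have := congrArg (fun p : Vdk d (k+1) => p.1 m0) hWt
          simpa [hWpdef, Prod.smul_fst, smul_eq_mul] using this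
        have ht1 : t = 1 := by
          have h' : (t - 1) * w.1 m0 = 0 := by rw [sub_mul, one_mul]; linarith
          rcases mul_eq_zero.1 h' with h | h
          · linarith
          · exact absurd h hm0
        have h2 : w.2 j + ε = t * w.2 j := by
          have := congrArg (fun p : Vdk d (k+1) => p.2 j) hWt
          simpa [hWpdef, Prod.smul_snd, smul_eq_mul] using this
        rw [ht1, one_mul] at h2
        linarith
      -- D = ∑ w.2 i > 0
      set D : ℝ := ∑ i, w.2 i with hDdef
      have hDμ : ∑ i, μ i w.1 = -D := by
        rw [hDdef, ← Finset.sum_neg_distrib]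
        exact Finset.sum_congr rfl fun i _ => by rw [htight i, neg_neg]
      obtain ⟨c0, hc0, hmem0⟩ := exists_neg_smul_mem hrefl.2.1 w.1
      have hbd : ∑ i, μ i w.1 ≤ pairing ((-c0) • w.1) w.1 := hmusum _ _ hmem0
      rw [pairing_smul_left] at hbd
      have hDpos : (0:ℝ) < D := by nlinarith [pairing_self_pos hy]
      -- D is an integer
      choose zs hzs using hwlat.2
      have hDz : D = ((∑ i, zs i : ℤ) : ℝ) := by
        rw [hDdef]
        push_cast
        exact Finset.sum_congr rfl fun i _ => hzs i
      -- y' = D⁻¹ • w.1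
      set y' : Fin d → ℝ := D⁻¹ • w.1 with hy'def
      have hμy' : ∀ i, μ i y' = D⁻¹ * μ i w.1 := fun i =>
        hμhom i D⁻¹ w.1 (inv_nonneg.2 hDpos.le)
      have hsumy' : ∑ i, μ i y' = -1 := by
        rw [Finset.sum_congr rfl fun i _ => hμy' i, ← Finset.mul_sum, hDμ]
        field_simp
      have hy'mem : y' ∈ polarDual (∑ i, Δ i) := by
        intro x hx
        have h1 : pairing x y' = D⁻¹ * pairing x w.1 := pairing_smul_right _ _ _
        have h2 : -D ≤ pairing x w.1 := hDμ ▸ hmusum w.1 x hx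
        have h3 : D⁻¹ * (-D) ≤ D⁻¹ * pairing x w.1 :=
          mul_le_mul_of_nonneg_left h2 (inv_nonneg.2 hDpos.le)
        have h4 : D⁻¹ * (-D) = -1 := by field_simp
        rw [h1]
        linarith
      -- y' is an extreme point of the dual polytope
      have hy'ext : y' ∈ Set.extremePoints ℝ (polarDual (∑ i, Δ i)) := by
        refine ⟨hy'mem, ?_⟩
        intro p hp q hq hseg
        obtain ⟨a, b, ha, hb, hab, habv⟩ := hseg
        have hδle : ∀ i, a * μ i p + b * μ i q ≤ μ i y' := fun i => by
          have h := hμsup i a b p q ha.le hb.le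
          rwa [habv] at h
        have hδeq : ∀ i, a * μ i p + b * μ i q = μ i y' := by
          by_contra hcon
          push_neg at hcon
          obtain ⟨i1, hi1⟩ := hcon
          have hlt : a * μ i1 p + b * μ i1 q < μ i1 y' := lt_of_le_of_ne (hδle i1) hi1
          have hsum_lt : ∑ i, (a * μ i p + b * μ i q) < ∑ i, μ i y' :=
            Finset.sum_lt_sum (fun i _ => hδle i) ⟨i1, Finset.mem_univ i1, hlt⟩
          rw [Finset.sum_add_distrib, ← Finset.mul_sum, ← Finset.mul_sum, hsumy'] at hsum_lt
          nlinarith [hsump p hp, hsump q hq]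
        have hsum_eq : a * (∑ i, μ i p) + b * (∑ i, μ i q) = -1 := by
          rw [Finset.mul_sum, Finset.mul_sum, ← Finset.sum_add_distrib]
          rw [Finset.sum_congr rfl fun i _ => hδeq i]
          exact hsumy'
        have hμpeq : (∑ i, μ i p) = -1 ∧ (∑ i, μ i q) = -1 := by
          constructor <;> nlinarith [hsump p hp, hsump q hq]
        set Wp : Vdk d (k+1) := (D • p, fun i => -(D * μ i p)) with hWpdef
        set Wq : Vdk d (k+1) := (D • q, fun i => -(D * μ i q)) with hWqdef
        have hWpm : Wp ∈ dualConeV (cayleyCone Δ) := (hdual_iff Wp).2 fun m => by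
          show 0 ≤ μ m (D • p) + -(D * μ m p)
          rw [hμhom m D p hDpos.le]
          linarith
        have hWqm : Wq ∈ dualConeV (cayleyCone Δ) := (hdual_iff Wq).2 fun m => by
          show 0 ≤ μ m (D • q) + -(D * μ m q)
          rw [hμhom m D q hDpos.le]
          linarith
        have hseg2 : w ∈ openSegment ℝ Wp Wq := by
          refine ⟨a, b, ha, hb, hab, ?_⟩
          refine Prod.ext ?_ ?_
          · show a • (D • p) + b • (D • q) = w.1
            rw [smul_comm a D, smul_comm b D, ← smul_add, habv, hy'def]
            rw [smul_smul, mul_inv_cancel₀ (ne_of_gt hDpos), one_smul]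
          · show a • (fun i => -(D * μ i p)) + b • (fun i => -(D * μ i q)) = w.2
            funext i
            show a * -(D * μ i p) + b * -(D * μ i q) = w.2 i
            have h1 : μ i y' = D⁻¹ * μ i w.1 := hμy' i
            have h2 : a * μ i p + b * μ i q = μ i y' := hδeq i
            have h3 : w.2 i = -μ i w.1 := htight i
            have hD0 : D ≠ 0 := ne_of_gt hDpos
            calc a * -(D * μ i p) + b * -(D * μ i q)
                = -(D * (a * μ i p + b * μ i q)) := by ring
              _ = -(D * μ i y') := by rw [h2]
              _ = -(D * (D⁻¹ * μ i w.1)) := by rw [h1]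
              _ = -μ i w.1 := by field_simp
              _ = w.2 i := h3.symm
        obtain ⟨t1, ht1n, hW1⟩ := hwext.2 hWpm hWqm hwray hseg2
        have key : ∀ (pp : Fin d → ℝ) (tt : ℝ),
            (∑ i, μ i pp) = -1 →
            ((D • pp, fun i => -(D * μ i pp)) : Vdk d (k+1)) = tt • w → pp = y' := by
          intro pp tt hppsum heq
          have hsnd : ∀ i, -(D * μ i pp) = tt * w.2 i := fun i => by
            have := congrArg (fun z : Vdk d (k+1) => z.2 i) heq
            simpa [Prod.smul_snd, smul_eq_mul] using this
          have hsum2 : D = tt * D := by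
            have hs := Finset.sum_congr rfl fun i (_ : i ∈ Finset.univ) => hsnd i
            rw [Finset.sum_neg_distrib, ← Finset.mul_sum, hppsum, ← Finset.mul_sum, ← hDdef] at hs
            linarith [hs]
          have htt1 : tt = 1 := by
            have h' : (tt - 1) * D = 0 := by rw [sub_mul, one_mul]; linarith
            rcases mul_eq_zero.1 h' with h | h
            · linarith
            · exact absurd h (ne_of_gt hDpos)
          have hfst : D • pp = w.1 := by
            have := congrArg (fun z : Vdk d (k+1) => z.1) heq
            simpa [htt1] using this
          rw [hy'def, ← hfst, smul_smul, inv_mul_cancel₀ (ne_of_gt hDpos), one_smul]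
        exact key p t1 hμpeq.1 hW1
      -- y' is a lattice point
      obtain ⟨T, hTfin, hTlat, hTeq⟩ := hrefl.2.2
      rw [hTeq] at hy'ext
      have hy'T : y' ∈ T := extremePoints_convexHull_subset hy'ext
      have hy'lat : IsLatticePt y' := hTlat _ hy'T
      -- D = 1 via primitivity
      have hD1 : D ≤ 1 := by
        by_contra hD1
        push_neg at hD1
        have hlatD : IsLatticePtV (D⁻¹ • w) := by
          constructor
          · show IsLatticePt (D⁻¹ • w.1)
            exact hy'lat
          · intro i
            show ∃ z : ℤ, D⁻¹ * w.2 i = (z : ℝ)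
            have h1 : D⁻¹ * w.2 i = -μ i y' := by
              rw [htight i, hμy' i]
              ring
            obtain ⟨zz, hzz⟩ := pairing_int (hSlat i _ (hxmS i y')) hy'lat
            exact ⟨-zz, by rw [h1]; show -(pairing (xm i y') y') = _; rw [hzz]; push_cast; ring⟩
        exact hwprim D⁻¹ (by positivity) (inv_lt_one_of_one_lt₀ hD1) hlatD
      have hDeq : D = 1 := by
        set zD : ℤ := ∑ i, zs i with hzDdef
        have h1 : (1:ℤ) ≤ zD := by
          have : (0:ℝ) < (zD : ℝ) := by rw [← hDz]; exact hDpos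
          exact_mod_cast this
        have h2 : zD ≤ 1 := by
          have : (zD:ℝ) ≤ 1 := by rw [← hDz]; exact hD1
          exact_mod_cast this
        rw [hDz]
        exact_mod_cast le_antisymm h2 h1
      show pairing (0 : Fin d → ℝ) w.1 + pairing (fun _ => 1) w.2 = 1
      rw [pairing_zero_left, zero_add]
      show (∑ i, 1 * w.2 i) = 1
      have hfin : (∑ i, 1 * w.2 i) = D := by
        rw [hDdef]
        exact Finset.sum_congr rfl fun i _ => one_mul _
      rw [hfin, hDeq]
  · -- PART 3
    simp [pairingV, pairing]
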